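/- Let Q be a positive integer with π(Q) ≤ k (π the prime-counting function). Then the k-fold sumset of F_Q = {β ∈ ℚ/ℤ : ord(β) ≤ Q} equals the subgroup G_Q = {β ∈ ℚ/ℤ : ord(β) divides lcm(1, …, Q)}. -/

import Mathlib

-- every element of ℚ/ℤ has positive additive order
lemma torsion_rat (β : AddCircle (1 : ℚ)) : 0 < addOrderOf β := by
  obtain ⟨q, rfl⟩ := QuotientAddGroup.mk_surjective β
  have h : (QuotientAddGroup.mk q : AddCircle (1:ℚ))
      = ((Rat.cast q * 1 : ℚ) : AddCircle (1:ℚ)) := by norm_num [Rat.cast_id]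
  rw [h, AddCircle.addOrderOf_coe_rat]
  exact q.pos

-- split an element of order dividing m*n (m,n coprime)
lemma split_coprime {M : Type*} [AddCommGroup M] {m n : ℕ} (h : Nat.Coprime m n)
    {β : M} (hβ : addOrderOf β ∣ m * n) :
    ∃ β₁ β₂ : M, addOrderOf β₁ ∣ m ∧ addOrderOf β₂ ∣ n ∧ β = β₁ + β₂ := by
  have h0 : ((m * n : ℕ) : ℤ) • β = 0 := by
    rw [natCast_zsmul]
    exact addOrderOf_dvd_iff_nsmul_eq_zero.mp hβ
  refine ⟨((n : ℤ) * Nat.gcdB m n) • β, ((m : ℤ) * Nat.gcdA m n) • β, ?_, ?_, ?_⟩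
  · rw [addOrderOf_dvd_iff_nsmul_eq_zero, ← natCast_zsmul, smul_smul]
    have : (m : ℤ) * ((n : ℤ) * Nat.gcdB m n) = Nat.gcdB m n * ((m * n : ℕ) : ℤ) := by
      push_cast; ring
    rw [this, ← smul_smul, h0, smul_zero]
  · rw [addOrderOf_dvd_iff_nsmul_eq_zero, ← natCast_zsmul, smul_smul]
    have : (n : ℤ) * ((m : ℤ) * Nat.gcdA m n) = Nat.gcdA m n * ((m * n : ℕ) : ℤ) := by
      push_cast; ring
    rw [this, ← smul_smul, h0, smul_zero]
  · rw [← add_smul]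
    have : (n : ℤ) * Nat.gcdB m n + (m : ℤ) * Nat.gcdA m n = 1 := by
      have := Nat.gcd_eq_gcd_ab m n
      rw [h] at this
      push_cast at this
      linarith
    rw [this, one_smul]

-- a prime power dividing lcm of a finset divides a member
lemma pow_dvd_mem_of_dvd_lcm {p a : ℕ} (hp : p.Prime) (ha : 0 < a) :
    ∀ s : Finset ℕ, (∀ m ∈ s, 0 < m) → p ^ a ∣ s.lcm id → ∃ m ∈ s, p ^ a ∣ m := by
  intro s
  induction s using Finset.induction with
  | empty =>
    intro _ hdvd
    simp only [Finset.lcm_empty, Nat.dvd_one] at hdvd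
    exact absurd hdvd (Nat.one_lt_pow ha.ne' hp.one_lt).ne'
  | @insert x s hx ih =>
    intro hpos hdvd
    rw [Finset.lcm_insert] at hdvd
    have hx0 : x ≠ 0 := (hpos x (Finset.mem_insert_self x s)).ne'
    have hl0 : s.lcm id ≠ 0 := by
      simp only [Ne, Finset.lcm_eq_zero_iff, Set.mem_image]
      rintro ⟨y, hy, hy0⟩
      exact (hpos y (Finset.mem_insert_of_mem hy)).ne' hy0
    have hdvd' : p ^ a ∣ Nat.lcm x (s.lcm id) := hdvd
    rw [hp.pow_dvd_iff_le_factorization (Nat.lcm_ne_zero hx0 hl0),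
      Nat.factorization_lcm hx0 hl0, Finsupp.sup_apply, le_sup_iff] at hdvd'
    rcases hdvd' with h | h
    · exact ⟨x, Finset.mem_insert_self x s,
        (hp.pow_dvd_iff_le_factorization hx0).mpr h⟩
    · obtain ⟨m, hm, hm'⟩ := ih (fun m hm => hpos m (Finset.mem_insert_of_mem hm))
        ((hp.pow_dvd_iff_le_factorization hl0).mpr h)
      exact ⟨m, Finset.mem_insert_of_mem hm, hm'⟩

-- decompose β with order dividing a product of prime powers
lemma decompose {M : Type*} [AddCommGroup M] :
    ∀ (s : Finset ℕ), (∀ p ∈ s, Nat.Prime p) → ∀ (e : ℕ → ℕ) (β : M),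
      addOrderOf β ∣ ∏ p ∈ s, p ^ e p →
      ∃ f : ℕ → M, (∀ p ∈ s, addOrderOf (f p) ∣ p ^ e p) ∧ β = ∑ p ∈ s, f p := by
  intro s
  induction s using Finset.induction with
  | empty =>
    intro _ e β hβ
    simp only [Finset.prod_empty, Nat.dvd_one] at hβ
    refine ⟨fun _ => 0, by simp, ?_⟩
    have : β = 0 := by simpa using addOrderOf_dvd_iff_nsmul_eq_zero.mp (dvd_of_eq hβ)
    simp [this]
  | @insert a s ha ih =>
    intro hprime e β hβ
    rw [Finset.prod_insert ha] at hβ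
    have hcop : Nat.Coprime (a ^ e a) (∏ p ∈ s, p ^ e p) := by
      apply Nat.Coprime.prod_right
      intro p hp
      apply Nat.Coprime.pow
      exact (Nat.coprime_primes (hprime a (Finset.mem_insert_self a s))
        (hprime p (Finset.mem_insert_of_mem hp))).mpr (fun h => ha (by rw [h]; exact hp))
    obtain ⟨β₁, β₂, h₁, h₂, rfl⟩ := split_coprime hcop hβ
    obtain ⟨g, hg₁, hg₂⟩ := ih (fun p hp => hprime p (Finset.mem_insert_of_mem hp)) e β₂ h₂
    refine ⟨Function.update g a β₁, ?_, ?_⟩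
    · intro p hp
      rcases Finset.mem_insert.mp hp with rfl | hp'
      · simpa using h₁
      · have hpa : p ≠ a := by rintro rfl; exact ha hp'
        rw [Function.update_of_ne hpa]
        exact hg₁ p hp' 
    · rw [Finset.sum_insert ha, Function.update_self]
      congr 1
      rw [hg₂]
      apply Finset.sum_congr rfl
      intro p hp
      have hpa : p ≠ a := by rintro rfl; exact ha hp
      exact (Function.update_of_ne hpa β₁ g).symm

theorem stmt_18 (Q k : ℕ) (hQ : 0 < Q) (hk : 0 < k)
    (hπ : ((Finset.range (Q + 1)).filter Nat.Prime).card ≤ k) :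
    {β : AddCircle (1 : ℚ) | ∃ f : Fin k → AddCircle (1 : ℚ),
        (∀ i, addOrderOf (f i) ≤ Q) ∧ β = ∑ i, f i}
      = {β : AddCircle (1 : ℚ) | addOrderOf β ∣ (Finset.Icc 1 Q).lcm id} := by
  set L := (Finset.Icc 1 Q).lcm id with hL
  have hmemL : ∀ m ∈ Finset.Icc 1 Q, (0:ℕ) < m := fun m hm => (Finset.mem_Icc.mp hm).1
  ext β
  simp only [Set.mem_setOf_eq]
  constructor
  · rintro ⟨f, hf, rfl⟩
    rw [addOrderOf_dvd_iff_nsmul_eq_zero, Finset.smul_sum]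
    apply Finset.sum_eq_zero
    intro i _
    rw [← addOrderOf_dvd_iff_nsmul_eq_zero]
    exact Finset.dvd_lcm (f := id) (Finset.mem_Icc.mpr ⟨torsion_rat _, hf i⟩)
  · intro hβ
    set n := addOrderOf β with hn
    have hn0 : n ≠ 0 := (torsion_rat β).ne'
    -- decompose over prime factors of n
    have hfact : ∏ p ∈ n.primeFactors, p ^ n.factorization p = n := by
      rw [← Nat.support_factorization]
      exact Nat.factorization_prod_pow_eq_self hn0
    obtain ⟨f, hf₁, hf₂⟩ := decompose n.primeFactors (fun p hp => Nat.prime_of_mem_primeFactors hp)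
      n.factorization β (by rw [hfact])
    -- each piece has small order
    have hord : ∀ p ∈ n.primeFactors, addOrderOf (f p) ≤ Q := by
      intro p hp
      have hpp := Nat.prime_of_mem_primeFactors hp
      have he : 0 < n.factorization p :=
        Nat.Prime.factorization_pos_of_dvd hpp hn0 (Nat.dvd_of_mem_primeFactors hp)
      have hdvdL : p ^ n.factorization p ∣ L := dvd_trans (Nat.ordProj_dvd n p) hβ
      obtain ⟨m, hm, hm'⟩ := pow_dvd_mem_of_dvd_lcm hpp he _ hmemL hdvdL
      calc addOrderOf (f p) ≤ p ^ n.factorization p :=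
            Nat.le_of_dvd (pow_pos hpp.pos _) (hf₁ p hp)
        _ ≤ m := Nat.le_of_dvd (hmemL m hm) hm'
        _ ≤ Q := (Finset.mem_Icc.mp hm).2
    -- card bound
    have hsub : n.primeFactors ⊆ (Finset.range (Q + 1)).filter Nat.Prime := by
      intro p hp
      have hpp := Nat.prime_of_mem_primeFactors hp
      have : p ∣ L := dvd_trans (dvd_trans (Nat.dvd_of_mem_primeFactors hp) (dvd_refl n)) hβ
      obtain ⟨m, hm, hm'⟩ := pow_dvd_mem_of_dvd_lcm hpp one_pos _ hmemL (by simpa using this)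
      refine Finset.mem_filter.mpr ⟨Finset.mem_range.mpr ?_, hpp⟩
      have h1 : p ≤ m := by simpa using Nat.le_of_dvd (hmemL m hm) hm'
      have h2 := (Finset.mem_Icc.mp hm).2
      omega
    have hcard : n.primeFactors.card ≤ k := le_trans (Finset.card_le_card hsub) hπ
    -- embed into Fin k and pad with zeros
    obtain ⟨g⟩ : Nonempty (↥n.primeFactors ↪ Fin k) := by
      rw [Function.Embedding.nonempty_iff_card_le]
      simpa using hcard
    classical
    refine ⟨fun i => if h : ∃ x : ↥n.primeFactors, g x = i then f ↑h.choose else 0, ?_, ?_⟩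
    · intro i
      by_cases h : ∃ x : ↥n.primeFactors, g x = i
      · simp only [dif_pos h]
        exact hord _ h.choose.2
      · simp only [dif_neg h]
        rw [addOrderOf_zero]; exact hQ
    · rw [hf₂]
      rw [← Finset.sum_subset (Finset.subset_univ (Finset.univ.map g))]
      · rw [Finset.sum_map]
        rw [← Finset.sum_attach n.primeFactors (fun p => f p)]
        apply Finset.sum_congr rfl
        intro x _
        have h : ∃ y : ↥n.primeFactors, g y = g x := ⟨x, rfl⟩
        simp only [dif_pos h]
        have := h.choose_spec
        have hx : h.choose = x := g.injective this
        rw [hx]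
      · intro i _ hi
        rw [dif_neg]
        rintro ⟨x, rfl⟩
        exact hi (Finset.mem_map_of_mem g (Finset.mem_univ x))
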